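/- Let φ and ψ be the 2-forms on ℝ^{4s} with matrices [φ] = [[0, -I_{2s}],[I_{2s}, 0]] and [ψ] = [[0, A],[-Aᵀ, 0]] for a 2s × 2s real matrix A, and define the ℝ²-valued bracket [u,v] = (φ(u,v), ψ(u,v)). Then the resulting 2-step algebra n = ℝ^{4s} ⊕ ℝ² is fat if and only if for all (x,y) ∈ ℝ² \ {0}, the matrix x·[φ] + y·[ψ] is invertible, which holds if and only if xI + yA and xI - yAᵀ are invertible for all (x,y) ≠ 0, i.e., A has no real eigenvalues. -/

import Mathlib

open Matrix


variable {n : Type*} [Fintype n] [DecidableEq n]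

lemma smul_isUnit_iff {c : ℝ} (hc : c ≠ 0) (M : Matrix n n ℝ) :
    IsUnit (c • M) ↔ IsUnit M := by
  rw [Matrix.isUnit_iff_isUnit_det, Matrix.isUnit_iff_isUnit_det, det_smul,
    isUnit_iff_ne_zero, isUnit_iff_ne_zero, mul_ne_zero_iff]
  simp [pow_ne_zero _ hc]

lemma key (B : Matrix n n ℝ) :
    (∀ x y : ℝ, (x, y) ≠ (0, 0) → IsUnit (x • (1 : Matrix n n ℝ) + y • B)) ↔
      spectrum ℝ B = ∅ := by
  constructor
  · intro h
    rw [Set.eq_empty_iff_forall_notMem]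
    intro μ hμ
    rw [spectrum.mem_iff, Algebra.algebraMap_eq_smul_one] at hμ
    exact hμ (by simpa [sub_eq_add_neg, neg_smul] using h μ (-1) (by simp))
  · intro h x y hxy
    rcases eq_or_ne y 0 with hy | hy
    · have hx : x ≠ 0 := by
        rintro rfl; exact hxy (by simp [hy])
      rw [hy, zero_smul, add_zero, smul_isUnit_iff hx]
      exact isUnit_one
    · have hμ : (-x / y) ∉ spectrum ℝ B := by rw [h]; exact Set.notMem_empty _
      rw [spectrum.notMem_iff, Algebra.algebraMap_eq_smul_one] at hμ
      have e : x • (1 : Matrix n n ℝ) + y • B = (-y) • ((-x / y) • (1 : Matrix n n ℝ) - B) := by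
        rw [smul_sub, smul_smul]
        field_simp
        rw [neg_smul, sub_neg_eq_add]
      rw [e, smul_isUnit_iff (neg_ne_zero.mpr hy)]
      exact hμ

lemma specT (B : Matrix n n ℝ) : spectrum ℝ Bᵀ = spectrum ℝ B := by
  ext μ
  simp only [spectrum.mem_iff, Algebra.algebraMap_eq_smul_one]
  have e : μ • (1 : Matrix n n ℝ) - Bᵀ = (μ • (1 : Matrix n n ℝ) - B)ᵀ := by
    simp [transpose_sub, transpose_smul]
  rw [e, Matrix.isUnit_iff_isUnit_det, det_transpose, ← Matrix.isUnit_iff_isUnit_det]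

lemma specNeg (B : Matrix n n ℝ) : (spectrum ℝ (-B) = ∅) ↔ spectrum ℝ B = ∅ := by
  simp only [Set.eq_empty_iff_forall_notMem, spectrum.mem_iff,
    Algebra.algebraMap_eq_smul_one, not_not]
  constructor
  · intro h μ
    have := h (-μ)
    rwa [sub_neg_eq_add, show (-μ) • (1 : Matrix n n ℝ) + B = -(μ • 1 - B) by module,
      IsUnit.neg_iff _] at this
  · intro h μ
    have := h (-μ)
    rwa [sub_neg_eq_add, show μ • (1 : Matrix n n ℝ) + B = -((-μ) • 1 - B) by module,
      IsUnit.neg_iff _]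

lemma blockUnit (B C : Matrix n n ℝ) :
    IsUnit (fromBlocks 0 B C 0) ↔ IsUnit B ∧ IsUnit C := by
  have hJJ : fromBlocks (0 : Matrix n n ℝ) (1 : Matrix n n ℝ) (1 : Matrix n n ℝ) (0 : Matrix n n ℝ) * fromBlocks (0 : Matrix n n ℝ) (1 : Matrix n n ℝ) (1 : Matrix n n ℝ) (0 : Matrix n n ℝ) = 1 := by
    rw [fromBlocks_multiply]
    simp [← fromBlocks_one]
  have hJ : IsUnit (fromBlocks (0 : Matrix n n ℝ) (1 : Matrix n n ℝ) (1 : Matrix n n ℝ) (0 : Matrix n n ℝ)) := ⟨⟨_, _, hJJ, hJJ⟩, rfl⟩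
  have e : fromBlocks 0 B C 0 * fromBlocks (0 : Matrix n n ℝ) (1 : Matrix n n ℝ) (1 : Matrix n n ℝ) (0 : Matrix n n ℝ) = fromBlocks B 0 0 C := by
    rw [fromBlocks_multiply]; simp
  have step : IsUnit (fromBlocks 0 B C 0) ↔ IsUnit (fromBlocks B 0 0 C) := by
    rw [← e]
    constructor
    · exact fun h => h.mul hJ
    · intro h
      have := h.mul hJ
      rwa [mul_assoc, hJJ, mul_one] at this
  rw [step, Matrix.isUnit_iff_isUnit_det, det_fromBlocks_zero₂₁, IsUnit.mul_iff,
    ← Matrix.isUnit_iff_isUnit_det, ← Matrix.isUnit_iff_isUnit_det]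


/-- With `[φ] = [[0,-I],[I,0]]` and `[ψ] = [[0,A],[-Aᵀ,0]]` on `ℝ^{4s}`, the
2-step algebra with bracket `(φ(u,v), ψ(u,v))` is fat iff `x[φ] + y[ψ]` is invertible for
all `(x,y) ≠ 0`, iff `xI + yA` and `xI - yAᵀ` are invertible for all `(x,y) ≠ 0`, iff `A`
has no real eigenvalues. -/
theorem stmt12 (s : ℕ) (A : Matrix (Fin (2 * s)) (Fin (2 * s)) ℝ)
    (Φ Ψ : Matrix (Fin (2 * s) ⊕ Fin (2 * s)) (Fin (2 * s) ⊕ Fin (2 * s)) ℝ)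
    (hΦ : Φ = Matrix.fromBlocks 0 (-1) 1 0)
    (hΨ : Ψ = Matrix.fromBlocks 0 A (-Aᵀ) 0) :
    ((∀ x y : ℝ, (x, y) ≠ (0, 0) → IsUnit (x • Φ + y • Ψ)) ↔
      (∀ x y : ℝ, (x, y) ≠ (0, 0) →
        IsUnit (x • (1 : Matrix (Fin (2 * s)) (Fin (2 * s)) ℝ) + y • A) ∧
        IsUnit (x • (1 : Matrix (Fin (2 * s)) (Fin (2 * s)) ℝ) - y • Aᵀ))) ∧
    ((∀ x y : ℝ, (x, y) ≠ (0, 0) →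
        IsUnit (x • (1 : Matrix (Fin (2 * s)) (Fin (2 * s)) ℝ) + y • A) ∧
        IsUnit (x • (1 : Matrix (Fin (2 * s)) (Fin (2 * s)) ℝ) - y • Aᵀ)) ↔
      spectrum ℝ A = ∅) := by
  subst hΦ hΨ
  -- P2 ↔ spectrum = ∅
  have hspecA : spectrum ℝ A = ∅ ↔ spectrum ℝ (-Aᵀ) = ∅ := by
    rw [specNeg, specT]
  have hP2 : (∀ x y : ℝ, (x, y) ≠ (0, 0) →
        IsUnit (x • (1 : Matrix (Fin (2 * s)) (Fin (2 * s)) ℝ) + y • A) ∧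
        IsUnit (x • (1 : Matrix (Fin (2 * s)) (Fin (2 * s)) ℝ) - y • Aᵀ)) ↔ spectrum ℝ A = ∅ := by
    have split : (∀ x y : ℝ, (x, y) ≠ (0, 0) →
        IsUnit (x • (1 : Matrix (Fin (2 * s)) (Fin (2 * s)) ℝ) + y • A) ∧
        IsUnit (x • (1 : Matrix (Fin (2 * s)) (Fin (2 * s)) ℝ) - y • Aᵀ)) ↔
        ((∀ x y : ℝ, (x, y) ≠ (0, 0) → IsUnit (x • (1 : Matrix (Fin (2 * s)) (Fin (2 * s)) ℝ) + y • A)) ∧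
         (∀ x y : ℝ, (x, y) ≠ (0, 0) → IsUnit (x • (1 : Matrix (Fin (2 * s)) (Fin (2 * s)) ℝ) + y • (-Aᵀ)))) := by
      constructor
      · intro h
        exact ⟨fun x y hxy => (h x y hxy).1,
          fun x y hxy => by simpa [sub_eq_add_neg, smul_neg] using (h x y hxy).2⟩
      · intro h x y hxy
        exact ⟨h.1 x y hxy, by simpa [sub_eq_add_neg, smul_neg] using h.2 x y hxy⟩
    rw [split, key, key, ← hspecA, and_self]
  refine ⟨?_, hP2⟩
  rw [hP2]
  -- P1 ↔ spectrum = ∅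
  have hblock : ∀ x y : ℝ,
      x • (fromBlocks 0 (-1) 1 0 : Matrix (Fin (2 * s) ⊕ Fin (2 * s)) (Fin (2 * s) ⊕ Fin (2 * s)) ℝ) + y • fromBlocks 0 A (-Aᵀ) 0 =
        fromBlocks 0 (-(x • (1 : Matrix (Fin (2 * s)) (Fin (2 * s)) ℝ) - y • A)) (x • (1 : Matrix (Fin (2 * s)) (Fin (2 * s)) ℝ) - y • Aᵀ) 0 := by
    intro x y
    rw [fromBlocks_smul, fromBlocks_smul, fromBlocks_add]
    rw [Matrix.fromBlocks_inj]
    refine ⟨by module, by module, by module, by module⟩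
  have key2 : (∀ x y : ℝ, (x, y) ≠ (0, 0) → IsUnit (x • (1 : Matrix (Fin (2 * s)) (Fin (2 * s)) ℝ) - y • A)) ↔
      spectrum ℝ A = ∅ := by
    rw [show (∀ x y : ℝ, (x, y) ≠ (0, 0) → IsUnit (x • (1 : Matrix (Fin (2 * s)) (Fin (2 * s)) ℝ) - y • A)) ↔
        (∀ x y : ℝ, (x, y) ≠ (0, 0) → IsUnit (x • (1 : Matrix (Fin (2 * s)) (Fin (2 * s)) ℝ) + y • (-A))) from
      forall_congr' fun x => forall_congr' fun y => imp_congr Iff.rfl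
        (by rw [smul_neg, sub_eq_add_neg]), key, specNeg]
  have key3 : (∀ x y : ℝ, (x, y) ≠ (0, 0) → IsUnit (x • (1 : Matrix (Fin (2 * s)) (Fin (2 * s)) ℝ) - y • Aᵀ)) ↔
      spectrum ℝ A = ∅ := by
    rw [show (∀ x y : ℝ, (x, y) ≠ (0, 0) → IsUnit (x • (1 : Matrix (Fin (2 * s)) (Fin (2 * s)) ℝ) - y • Aᵀ)) ↔
        (∀ x y : ℝ, (x, y) ≠ (0, 0) → IsUnit (x • (1 : Matrix (Fin (2 * s)) (Fin (2 * s)) ℝ) + y • (-Aᵀ))) from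
      forall_congr' fun x => forall_congr' fun y => imp_congr Iff.rfl
        (by rw [smul_neg, sub_eq_add_neg]), key, ← hspecA]
  constructor
  · intro h
    rw [← key2]
    intro x y hxy
    have hu := h x y hxy
    rw [hblock, blockUnit, IsUnit.neg_iff] at hu
    exact hu.1
  · intro h x y hxy
    rw [hblock, blockUnit, IsUnit.neg_iff]
    exact ⟨(key2.mpr h) x y hxy, (key3.mpr h) x y hxy⟩
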